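/- arXiv:2101.04396 — 2 statements merged into one kernel-verified Lean document; each statement's English description precedes it below -/
import Mathlib

section
/- For every x in V, one has Ω(x) = (1/2)‖x‖_V if and only if ‖M_{x,λ}‖ = ‖x‖_V for every λ ∈ ℂ with |λ| = 1. -/
/-!
Setting: `A` is a C*-algebra and `V` is a Hilbert C*-module over `A`.
`WithCStarModule A (A × V)` is the Hilbert `A`-module `A ⊕ V`, with inner product
`⟪(a, y), (b, z)⟫ = a * b + ⟪y, z⟫` and norm `‖(a, y)‖ = ‖a * a + ⟪y, y⟫‖ ^ (1/2)`
(both provided by Mathlib).  For `x : V` and `lam : ℂ` with `|lam| = 1`, the operator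
`M_{x,lam} : A ⊕ V → A ⊕ V`, `(a, y) ↦ (conj lam • ⟪x, y⟫, lam • (x <• a))` is encoded
by a family `M` of continuous linear maps satisfying the predicate `IsM` below, and the
numerical radius is `numRadius M x = (1/2) * sup_{|lam| = 1} ‖M x lam‖`.
-/

open scoped RightActions InnerProductSpace

noncomputable section

variable {A V : Type*} [NonUnitalCStarAlgebra A] [PartialOrder A] [StarOrderedRing A]
  [NormedAddCommGroup V] [Module ℂ V] [SMul A V] [CStarModule A V] [CompleteSpace V]

/-- The element of the Hilbert `A`-module `A ⊕ V` with components `a : A` and `y : V`. -/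
def pairElem (a : A) (y : V) : WithCStarModule A (A × V) :=
  (WithCStarModule.equiv A (A × V)).symm (a, y)

/-- `IsM M` asserts that for every `x : V` and every unimodular `lam : ℂ`, the continuous
linear map `M x lam` is the operator `M_{x,lam} : (a, y) ↦ (conj lam • ⟪x, y⟫, lam • (x <• a))`
on `A ⊕ V`. -/
def IsM (M : V → ℂ → (WithCStarModule A (A × V) →L[ℂ] WithCStarModule A (A × V))) : Prop :=
  ∀ (x : V) (lam : ℂ), ‖lam‖ = 1 → ∀ (a : A) (y : V),
    M x lam (pairElem a y) = pairElem ((starRingEnd ℂ) lam • ⟪x, y⟫_A) (lam • (a • x))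

/-- The numerical radius `Ω(x) = (1/2) * sup_{|lam| = 1} ‖M_{x,lam}‖`. -/
def numRadius (M : V → ℂ → (WithCStarModule A (A × V) →L[ℂ] WithCStarModule A (A × V)))
    (x : V) : ℝ :=
  (1 / 2) * sSup ((fun lam : ℂ => ‖M x lam‖) '' {lam : ℂ | ‖lam‖ = 1})

include A in
lemma norm_smul_unimodular {lam : ℂ} (hlam : ‖lam‖ = 1) (v : V) : ‖lam • v‖ = ‖v‖ := by
  have h1 : star lam * lam = 1 := by
    rw [show star lam = (starRingEnd ℂ) lam from rfl, RCLike.conj_mul, hlam]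
    norm_num
  have : ⟪lam • v, lam • v⟫_A = ⟪v, v⟫_A := by
    rw [CStarModule.inner_smul_left_complex, CStarModule.inner_smul_right_complex,
      smul_smul, h1, one_smul]
  rw [CStarModule.norm_eq_sqrt_norm_inner_self (A := A), this,
    ← CStarModule.norm_eq_sqrt_norm_inner_self (A := A)]

lemma norm_op_smul_le (x : V) (a : A) : ‖a • x‖ ≤ ‖x‖ * ‖a‖ := by
  have h : ‖a • x‖ ^ 2 ≤ (‖a • x‖ * ‖x‖) * ‖a‖ := by
    rw [CStarModule.norm_sq_eq (A := A)]
    calc ‖⟪a • x, a • x⟫_A‖ = ‖a * ⟪a • x, x⟫_A‖ := by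
          rw [CStarModule.inner_op_smul_right]
      _ ≤ ‖a‖ * ‖⟪a • x, x⟫_A‖ := norm_mul_le _ _
      _ ≤ (‖a • x‖ * ‖x‖) * ‖a‖ := by
          rw [mul_comm ‖a‖]; gcongr; exact CStarModule.norm_inner_le V
  rcases eq_or_lt_of_le (norm_nonneg (a • x)) with h0 | h0
  · rw [← h0]; positivity
  · nlinarith

lemma norm_pairElem_le (a : A) (y : V) : ‖pairElem a y‖ ≤ ‖a‖ + ‖y‖ := by
  simpa [pairElem] using WithCStarModule.prod_norm_le_norm_add (pairElem a y)

lemma norm_le_pairElem₁ (a : A) (y : V) : ‖a‖ ≤ ‖pairElem a y‖ := by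
  have := WithCStarModule.max_le_prod_norm (pairElem a y)
  simp only [pairElem, WithCStarModule.equiv_symm_fst, WithCStarModule.equiv_symm_snd,
    max_le_iff] at this
  exact this.1

lemma norm_le_pairElem₂ (a : A) (y : V) : ‖y‖ ≤ ‖pairElem a y‖ := by
  have := WithCStarModule.max_le_prod_norm (pairElem a y)
  simp only [pairElem, WithCStarModule.equiv_symm_fst, WithCStarModule.equiv_symm_snd,
    max_le_iff] at this
  exact this.2

lemma norm_pairElem_right (y : V) : ‖pairElem (0 : A) y‖ = ‖y‖ :=
  le_antisymm (by simpa using norm_pairElem_le (0 : A) y) (norm_le_pairElem₂ 0 y)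

lemma normM_le (M : V → ℂ → (WithCStarModule A (A × V) →L[ℂ] WithCStarModule A (A × V)))
    (hM : IsM M) (x : V) {lam : ℂ} (hlam : ‖lam‖ = 1) : ‖M x lam‖ ≤ 2 * ‖x‖ := by
  refine ContinuousLinearMap.opNorm_le_bound _ (by positivity) fun v => ?_
  have hv : v = pairElem v.1 v.2 := rfl
  rw [hv, hM x lam hlam v.1 v.2]
  calc ‖pairElem ((starRingEnd ℂ) lam • ⟪x, v.2⟫_A) (lam • (v.1 • x))‖
      ≤ ‖(starRingEnd ℂ) lam • ⟪x, v.2⟫_A‖ + ‖lam • (v.1 • x)‖ := norm_pairElem_le _ _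
    _ = ‖⟪x, v.2⟫_A‖ + ‖v.1 • x‖ := by
        rw [norm_smul, norm_smul_unimodular (A := A) hlam]
        simp [hlam]
    _ ≤ ‖x‖ * ‖v.2‖ + ‖x‖ * ‖v.1‖ := by
        gcongr
        · exact CStarModule.norm_inner_le V
        · exact norm_op_smul_le x v.1
    _ ≤ ‖x‖ * ‖pairElem v.1 v.2‖ + ‖x‖ * ‖pairElem v.1 v.2‖ := by
        gcongr
        · exact norm_le_pairElem₂ v.1 v.2
        · exact norm_le_pairElem₁ v.1 v.2
    _ = 2 * ‖x‖ * ‖pairElem v.1 v.2‖ := by ring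

lemma le_normM (M : V → ℂ → (WithCStarModule A (A × V) →L[ℂ] WithCStarModule A (A × V)))
    (hM : IsM M) (x : V) {lam : ℂ} (hlam : ‖lam‖ = 1) : ‖x‖ ≤ ‖M x lam‖ := by
  rcases eq_or_ne x 0 with rfl | hx
  · simp only [norm_zero]
    positivity
  have hb := ContinuousLinearMap.le_opNorm (M x lam) (pairElem (0 : A) x)
  rw [hM x lam hlam 0 x, norm_pairElem_right] at hb
  have hval : ‖pairElem ((starRingEnd ℂ) lam • ⟪x, x⟫_A) (lam • ((0 : A) • (x : V)))‖
      = ‖x‖ ^ 2 := by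
    have h0 : (0 : A) • (x : V) = 0 := by
      have : ⟪(0 : A) • (x : V), (0 : A) • (x : V)⟫_A = 0 := by
        rw [CStarModule.inner_op_smul_right, zero_mul]
      exact (CStarModule.inner_self (E := V)).mp this
    rw [h0, smul_zero]
    have h1 : ‖(starRingEnd ℂ) lam • ⟪x, x⟫_A‖ = ‖⟪x, x⟫_A‖ := by
      rw [norm_smul]; simp [hlam]
    calc ‖pairElem ((starRingEnd ℂ) lam • ⟪x, x⟫_A) (0 : V)‖
        = ‖(starRingEnd ℂ) lam • ⟪x, x⟫_A‖ := by
          refine le_antisymm ?_ (norm_le_pairElem₁ _ _)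
          simpa using norm_pairElem_le ((starRingEnd ℂ) lam • ⟪x, x⟫_A) (0 : V)
      _ = ‖x‖ ^ 2 := by rw [h1, ← CStarModule.norm_sq_eq]
  rw [hval] at hb
  have hxpos : 0 < ‖x‖ := norm_pos_iff.mpr hx
  nlinarith

theorem stmt7 (M : V → ℂ → (WithCStarModule A (A × V) →L[ℂ] WithCStarModule A (A × V))) (hM : IsM M) (x : V) :
    numRadius M x = (1 / 2) * ‖x‖ ↔ ∀ lam : ℂ, ‖lam‖ = 1 → ‖M x lam‖ = ‖x‖ := by
  set S := ((fun lam : ℂ => ‖M x lam‖) '' {lam : ℂ | ‖lam‖ = 1}) with hS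
  have hne : S.Nonempty := ⟨‖M x 1‖, ⟨1, by simp, rfl⟩⟩
  have hbdd : BddAbove S := by
    refine ⟨2 * ‖x‖, fun r hr => ?_⟩
    obtain ⟨lam, hlam, rfl⟩ := hr
    exact normM_le M hM x hlam
  constructor
  · intro h lam hlam
    have hsup : sSup S = ‖x‖ := by
      have := h
      unfold numRadius at this
      rw [← hS] at this
      linarith
    refine le_antisymm ?_ (le_normM M hM x hlam)
    rw [← hsup]
    exact le_csSup hbdd ⟨lam, hlam, rfl⟩
  · intro h
    have hSeq : S = {‖x‖} := by
      apply Set.eq_singleton_iff_nonempty_unique_mem.mpr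
      exact ⟨hne, fun r hr => by obtain ⟨lam, hlam, rfl⟩ := hr; exact h lam hlam⟩
    unfold numRadius
    rw [← hS, hSeq, csSup_singleton]
end
end

section
/- Let B be a C*-algebra and let a, b ∈ B. Then the spectral radius of a + b satisfies r(a + b) ≤ (1/2)(‖a‖ + ‖b‖ + sqrt((‖a‖ − ‖b‖)² + 4‖ab‖)); the right-hand side is the operator norm of the 2×2 complex matrix [[‖a‖, ‖ab‖^{1/2}],[‖ab‖^{1/2}, ‖b‖]]. -/
open scoped ENNReal NNReal

/-- The spectral radius of `u * v` is at most that of `v * u`. -/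
lemma aux_swap {A : Type*} [Ring A] [Algebra ℂ A] (u v : A) :
    spectralRadius ℂ (u * v) ≤ spectralRadius ℂ (v * u) := by
  rw [spectralRadius, spectralRadius]
  refine iSup₂_le fun k hk => ?_
  rcases eq_or_ne k 0 with rfl | h
  · simp
  · have hk' : k ∈ spectrum ℂ (v * u) := by
      have := (spectrum.unit_mem_mul_comm
        (a := u) (b := v) (r := Units.mk0 k h)).mp (by simpa using hk)
      simpa using this
    exact le_iSup₂ (f := fun k (_ : k ∈ spectrum ℂ (v * u)) => (‖k‖₊ : ℝ≥0∞)) k hk'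

lemma aux_unit00 {B : Type*} [Ring B] (X : Matrix (Fin 2) (Fin 2) B)
    (hX01 : X 0 1 = 0) (hX10 : X 1 0 = 0) (h : IsUnit X) : IsUnit (X 0 0) := by
  obtain ⟨Y, hY1, hY2⟩ := isUnit_iff_exists.mp h
  have e1 : X 0 0 * Y 0 0 = 1 := by
    have := congrArg (fun M => M 0 0) hY1
    simpa [Matrix.mul_apply, Fin.sum_univ_two, hX01, Matrix.one_apply] using this
  have e2 : Y 0 0 * X 0 0 = 1 := by
    have := congrArg (fun M => M 0 0) hY2
    simpa [Matrix.mul_apply, Fin.sum_univ_two, hX10, Matrix.one_apply] using this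
  exact ⟨⟨X 0 0, Y 0 0, e1, e2⟩, rfl⟩

/-- The spectral radius of `c` is at most that of the corner matrix `!![c, 0; 0, 0]`. -/
lemma aux_corner {B : Type*} [Ring B] [Algebra ℂ B] (c : B) :
    spectralRadius ℂ c ≤ spectralRadius ℂ (!![c, 0; 0, (0 : B)]) := by
  rw [spectralRadius, spectralRadius]
  refine iSup₂_le fun z hz => ?_
  have hz' : z ∈ spectrum ℂ (!![c, 0; 0, (0 : B)]) := by
    rw [spectrum.mem_iff] at hz ⊢
    intro hU
    apply hz
    have h00 := aux_unit00 _ (by simp [Matrix.algebraMap_matrix_apply])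
      (by simp [Matrix.algebraMap_matrix_apply]) hU
    simpa [Matrix.algebraMap_matrix_apply] using h00
  exact le_iSup₂ (f := fun k (_ : k ∈ spectrum ℂ (!![c, 0; 0, (0 : B)])) => (‖k‖₊ : ℝ≥0∞)) z hz'

section LinftyPart

attribute [local instance] Matrix.linftyOpNormedRing Matrix.linftyOpNormedAlgebra

lemma aux_row_norm {B : Type*} [NormedRing B] (M : Matrix (Fin 2) (Fin 2) B) (r : ℝ)
    (h0 : ‖M 0 0‖ + ‖M 0 1‖ ≤ r) (h1 : ‖M 1 0‖ + ‖M 1 1‖ ≤ r) : ‖M‖ ≤ r := by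
  have hr : 0 ≤ r := le_trans (by positivity) h0
  rw [Matrix.linfty_opNorm_def]
  have : (Finset.univ.sup fun i : Fin 2 => ∑ j : Fin 2, ‖M i j‖₊) ≤ r.toNNReal := by
    refine Finset.sup_le fun i _ => ?_
    fin_cases i
    · rw [← NNReal.coe_le_coe]
      push_cast [Fin.sum_univ_two]
      rw [Real.coe_toNNReal _ hr]
      exact h0
    · rw [← NNReal.coe_le_coe]
      push_cast [Fin.sum_univ_two]
      rw [Real.coe_toNNReal _ hr]
      exact h1
  calc ((Finset.univ.sup fun i : Fin 2 => ∑ j : Fin 2, ‖M i j‖₊ : ℝ≥0) : ℝ)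
      ≤ (r.toNNReal : ℝ) := NNReal.coe_le_coe.mpr this
    _ = r := Real.coe_toNNReal _ hr

set_option maxHeartbeats 1600000 in
/-- The spectral radius bound: first half of the statement. -/
lemma aux_part1 {B : Type*} [CStarAlgebra B] (a b : B) :
    spectralRadius ℂ (a + b) ≤
      ENNReal.ofReal
        ((1 / 2) * (‖a‖ + ‖b‖ + Real.sqrt ((‖a‖ - ‖b‖) ^ 2 + 4 * ‖a * b‖))) := by
  rcases subsingleton_or_nontrivial B with hB | hB
  · rw [spectrum.SpectralRadius.of_subsingleton]; exact zero_le
  set x := ‖a‖; set y := ‖b‖; set c := ‖a * b‖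
  have hx : 0 ≤ x := norm_nonneg a
  have hy : 0 ≤ y := norm_nonneg b
  have hc : 0 ≤ c := norm_nonneg (a * b)
  set ρ := (1 / 2) * (x + y + Real.sqrt ((x - y) ^ 2 + 4 * c)) with hρ
  have hρ0 : 0 ≤ ρ := by positivity
  refine ENNReal.le_of_forall_pos_le_add fun η hη _ => ?_
  set ε : ℝ := (η : ℝ) with hε
  have hε0 : 0 < ε := hη
  set cε : ℝ := c + ε ^ 2 with hcε
  have hcε0 : 0 < cε := by positivity
  set D : ℝ := (x - y) ^ 2 + 4 * cε with hD
  have hD0 : 0 < D := by positivity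
  have hsD : Real.sqrt D ^ 2 = D := Real.sq_sqrt hD0.le
  have hsD0 : 0 ≤ Real.sqrt D := Real.sqrt_nonneg D
  have habs : |x - y| < Real.sqrt D := by
    rw [← Real.sqrt_sq_eq_abs]
    exact Real.sqrt_lt_sqrt (sq_nonneg _) (by nlinarith)
  set t : ℝ := (y - x + Real.sqrt D) / (2 * cε) with htdef
  have ht : 0 < t := by
    apply div_pos _ (by positivity)
    have : x - y ≤ |x - y| := le_abs_self _
    nlinarith
  have htc : t ≠ 0 := ht.ne'
  set ρε : ℝ := (1 / 2) * (x + y + Real.sqrt D) with hρε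
  have h1 : x + t * cε = ρε := by
    rw [htdef, hρε]; field_simp; ring
  have h2 : t⁻¹ + y = ρε := by
    have hnum : 0 < y - x + Real.sqrt D := by
      have : x - y ≤ |x - y| := le_abs_self _
      nlinarith
    rw [htdef, hρε]
    rw [inv_div]
    rw [div_add' _ _ _ hnum.ne', div_eq_iff hnum.ne']
    nlinarith
  have hρερ : ρε ≤ ρ + ε := by
    rw [hρε, hρ]
    have key : Real.sqrt D ≤ Real.sqrt ((x - y) ^ 2 + 4 * c) + 2 * ε := by
      have h4 : 0 ≤ Real.sqrt ((x - y) ^ 2 + 4 * c) := Real.sqrt_nonneg _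
      have h5 : Real.sqrt ((x - y) ^ 2 + 4 * c) ^ 2 = (x - y) ^ 2 + 4 * c :=
        Real.sq_sqrt (by positivity)
      rw [show Real.sqrt ((x-y)^2+4*c) + 2*ε = Real.sqrt ((Real.sqrt ((x-y)^2+4*c) + 2*ε)^2) by
        rw [Real.sqrt_sq (by positivity)]]
      exact Real.sqrt_le_sqrt (by nlinarith)
    linarith
  set u : Matrix (Fin 2) (Fin 2) B := !![a, 0; t⁻¹ • 1, 0] with hu
  set v : Matrix (Fin 2) (Fin 2) B := !![1, t • b; 0, 0] with hv
  have hvu : v * u = !![a + b, 0; 0, 0] := by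
    rw [hu, hv, Matrix.mul_fin_two]
    congr 1 <;> simp [smul_mul_assoc, mul_smul_comm, smul_smul, inv_mul_cancel₀ htc,
      mul_inv_cancel₀ htc]
  have huv : u * v = !![a, t • (a * b); t⁻¹ • 1, b] := by
    rw [hu, hv, Matrix.mul_fin_two]
    congr 1 <;> simp [smul_mul_assoc, mul_smul_comm, smul_smul, inv_mul_cancel₀ htc,
      mul_inv_cancel₀ htc]
  haveI : NormOneClass (Matrix (Fin 2) (Fin 2) B) :=
    ⟨by rw [← Matrix.diagonal_one, Matrix.linfty_opNorm_diagonal]; exact norm_one⟩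
  haveI : @CompleteSpace (Matrix (Fin 2) (Fin 2) B)
      (PseudoMetricSpace.toUniformSpace (self := (Matrix.linftyOpNormedRing : NormedRing (Matrix (Fin 2) (Fin 2) B)).toPseudoMetricSpace)) :=
    inferInstanceAs (CompleteSpace (Fin 2 → Fin 2 → B))
  have hnorm : ‖u * v‖ ≤ ρ + ε := by
    rw [huv]
    refine aux_row_norm _ _ ?_ ?_
    · have e0 : ‖(!![a, t • (a * b); t⁻¹ • 1, b] : Matrix (Fin 2) (Fin 2) B) 0 0‖ = x := by
        simp
        rfl
      have e1 : ‖(!![a, t • (a * b); t⁻¹ • 1, b] : Matrix (Fin 2) (Fin 2) B) 0 1‖ = t * c := by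
        rw [show (!![a, t • (a * b); t⁻¹ • 1, b] : Matrix (Fin 2) (Fin 2) B) 0 1
          = t • (a * b) by simp]
        rw [norm_smul, Real.norm_eq_abs, abs_of_pos ht]
      rw [e0, e1]
      have : x + t * c ≤ x + t * cε := by nlinarith
      linarith
    · have e0 : ‖(!![a, t • (a * b); t⁻¹ • 1, b] : Matrix (Fin 2) (Fin 2) B) 1 0‖ = t⁻¹ := by
        rw [show (!![a, t • (a * b); t⁻¹ • 1, b] : Matrix (Fin 2) (Fin 2) B) 1 0
          = t⁻¹ • (1 : B) by simp]
        rw [norm_smul, norm_one, mul_one, Real.norm_eq_abs, abs_of_pos (inv_pos.mpr ht)]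
      have e1 : ‖(!![a, t • (a * b); t⁻¹ • 1, b] : Matrix (Fin 2) (Fin 2) B) 1 1‖ = y := by
        simp
        rfl
      rw [e0, e1]
      linarith
  calc spectralRadius ℂ (a + b) ≤ spectralRadius ℂ (v * u) := by
        rw [hvu]; exact aux_corner (a + b)
    _ ≤ spectralRadius ℂ (u * v) := aux_swap v u
    _ ≤ (‖u * v‖₊ : ℝ≥0∞) := spectrum.spectralRadius_le_nnnorm (𝕜 := ℂ) _
    _ = ENNReal.ofReal ‖u * v‖ := (ofReal_norm _).symm
    _ ≤ ENNReal.ofReal (ρ + ε) := ENNReal.ofReal_le_ofReal hnorm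
    _ = ENNReal.ofReal ρ + ENNReal.ofReal ε := ENNReal.ofReal_add hρ0 hε0.le
    _ = ENNReal.ofReal ρ + η := by rw [hε, ENNReal.ofReal_coe_nnreal]

end LinftyPart

section L2Part

open scoped Matrix.Norms.L2Operator

/-- The norm of the `2 × 2` matrix: second half of the statement. -/
lemma aux_part2 (x y c : ℝ) (hx : 0 ≤ x) (hy : 0 ≤ y) (hc : 0 ≤ c) :
    ‖(!![(x : ℂ), (Real.sqrt c : ℂ); (Real.sqrt c : ℂ), (y : ℂ)] : Matrix (Fin 2) (Fin 2) ℂ)‖ =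
      (1 / 2) * (x + y + Real.sqrt ((x - y) ^ 2 + 4 * c)) := by
  letI : CStarAlgebra (Matrix (Fin 2) (Fin 2) ℂ) := Matrix.instCStarAlgebra
  set s : ℝ := Real.sqrt c with hs
  set sD : ℝ := Real.sqrt ((x - y) ^ 2 + 4 * c) with hsD
  have hs2 : s * s = c := Real.mul_self_sqrt hc
  have hsD2 : sD * sD = (x - y) ^ 2 + 4 * c := Real.mul_self_sqrt (by positivity)
  have hsD0 : 0 ≤ sD := Real.sqrt_nonneg _
  set lp : ℝ := (x + y + sD) / 2 with hlp
  set lm : ℝ := (x + y - sD) / 2 with hlm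
  set N : Matrix (Fin 2) (Fin 2) ℂ := !![(x : ℂ), (s : ℂ); (s : ℂ), (y : ℂ)] with hN
  have hsa : IsSelfAdjoint N := by
    show star N = N
    ext i j
    fin_cases i <;> fin_cases j <;>
      simp [hN, Matrix.star_apply, Complex.star_def, Complex.conj_ofReal]
  have hspec : spectrum ℂ N = {((lp : ℝ) : ℂ), ((lm : ℝ) : ℂ)} := by
    ext z
    have hmat : algebraMap ℂ (Matrix (Fin 2) (Fin 2) ℂ) z - N
        = !![z - (x : ℂ), -(s : ℂ); -(s : ℂ), z - (y : ℂ)] := by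
      ext i j
      fin_cases i <;> fin_cases j <;>
        simp [hN, Matrix.algebraMap_matrix_apply]
    have e1 : ((lp : ℂ)) + (lm : ℂ) = (x : ℂ) + y := by
      push_cast [hlp, hlm]; ring
    have e2 : ((lp : ℂ)) * (lm : ℂ) = (x : ℂ) * y - c := by
      have h : lp * lm = x * y - c := by rw [hlp, hlm]; nlinarith [hsD2]
      exact_mod_cast congrArg Complex.ofReal h
    have e3 : ((s : ℂ)) * (s : ℂ) = (c : ℂ) := by
      exact_mod_cast congrArg Complex.ofReal hs2
    have hdet : (algebraMap ℂ (Matrix (Fin 2) (Fin 2) ℂ) z - N).det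
        = (z - (lp : ℂ)) * (z - (lm : ℂ)) := by
      rw [hmat, Matrix.det_fin_two_of]
      linear_combination -e3 + z * e1 - e2
    rw [spectrum.mem_iff, Matrix.isUnit_iff_isUnit_det, hdet, isUnit_iff_ne_zero, not_not,
      mul_eq_zero, sub_eq_zero, sub_eq_zero]
    simp [Set.mem_insert_iff]
  have hrad := IsSelfAdjoint.spectralRadius_eq_nnnorm (A := Matrix (Fin 2) (Fin 2) ℂ)
    (a := N) (by exact hsa)
  have hsup : spectralRadius ℂ N = (‖((lp : ℝ) : ℂ)‖₊ : ℝ≥0∞) ⊔ (‖((lm : ℝ) : ℂ)‖₊ : ℝ≥0∞) := by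
    rw [spectralRadius, hspec]
    simp [Set.mem_insert_iff, iSup_or, iSup_sup_eq]
  have hnn : (‖N‖₊ : ℝ≥0∞) = ((‖((lp : ℝ) : ℂ)‖₊ ⊔ ‖((lm : ℝ) : ℂ)‖₊ : ℝ≥0) : ℝ≥0∞) := by
    rw [← hrad, hsup]; simp
  have hnorm : ‖N‖ = max ‖((lp : ℝ) : ℂ)‖ ‖((lm : ℝ) : ℂ)‖ := by
    have h1 := ENNReal.coe_injective hnn
    have h2 := congrArg NNReal.toReal h1
    simpa [NNReal.coe_max] using h2
  have hlpn : ‖((lp : ℝ) : ℂ)‖ = lp := by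
    rw [Complex.norm_real, Real.norm_eq_abs, abs_of_nonneg (by rw [hlp]; positivity)]
  have hlmabs : ‖((lm : ℝ) : ℂ)‖ ≤ lp := by
    rw [Complex.norm_real, Real.norm_eq_abs, abs_le]
    constructor
    · rw [hlp, hlm]; nlinarith
    · rw [hlp, hlm]; nlinarith
  rw [hnorm, hlpn, max_eq_left hlmabs, hlp]
  ring

end L2Part

open scoped Matrix.Norms.L2Operator

/-- Spectral radius inequality for sums of elements in a C*-algebra: `r(a + b)` is at most the
operator norm of the `2 × 2` complex matrix `!![‖a‖, ‖a*b‖^(1/2); ‖a*b‖^(1/2), ‖b‖]`, which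
equals `(1/2) * (‖a‖ + ‖b‖ + sqrt((‖a‖ - ‖b‖)^2 + 4‖a*b‖))`. -/
theorem stmt12 {B : Type*} [CStarAlgebra B] (a b : B) :
    spectralRadius ℂ (a + b) ≤
      ENNReal.ofReal
        ((1 / 2) * (‖a‖ + ‖b‖ + Real.sqrt ((‖a‖ - ‖b‖) ^ 2 + 4 * ‖a * b‖))) ∧
    ‖(!![(‖a‖ : ℂ), (Real.sqrt ‖a * b‖ : ℂ);
        (Real.sqrt ‖a * b‖ : ℂ), (‖b‖ : ℂ)] : Matrix (Fin 2) (Fin 2) ℂ)‖ =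
      (1 / 2) * (‖a‖ + ‖b‖ + Real.sqrt ((‖a‖ - ‖b‖) ^ 2 + 4 * ‖a * b‖)) := by
  exact ⟨aux_part1 a b,
    aux_part2 ‖a‖ ‖b‖ ‖a * b‖ (norm_nonneg a) (norm_nonneg b) (norm_nonneg (a * b))⟩
end
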